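/- arXiv:2403.01453 — 2 statements merged into one kernel-verified Lean document; each statement's English description precedes it below -/
import Mathlib

section
/- Let A₁,…,Aₙ be real symmetric n×n matrices such that ⟨A_α, A_β⟩ = tr(A_α A_β) = 0 for α ≠ β, ‖A₁‖ = 1 (Hilbert–Schmidt norm), and ‖A₂‖ ≥ ‖A₃‖ ≥ … ≥ ‖Aₙ‖. Then ∑_{α=2}^{n} ‖[A₁, A_α]‖² ≤ ‖A₂‖² + ∑_{α=2}^{n} ‖A_α‖², where [A,B] = AB − BA. -/
open Matrix

namespace Lu
variable {n : ℕ} {ι : Type*}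

lemma trace_form (M N : Matrix (Fin n) (Fin n) ℝ) :
    Matrix.trace (M * Nᵀ) = ∑ pq : Fin n × Fin n, M pq.1 pq.2 * N pq.1 pq.2 := by
  rw [Fintype.sum_prod_type]
  simp [Matrix.trace, Matrix.diag, Matrix.mul_apply, Matrix.transpose_apply]

lemma sum_sq_subset (lam : Fin n → ℝ) (hlam : ∑ i, lam i ^ 2 = 1)
    (t : Finset (Fin n)) : ∑ i ∈ t, lam i ^ 2 ≤ 1 := by
  rw [← hlam]
  exact Finset.sum_le_sum_of_subset_of_nonneg (Finset.subset_univ t)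
    fun _ _ _ => sq_nonneg _

lemma bessel (s : Finset ι) (B : ι → Matrix (Fin n) (Fin n) ℝ)
    (hsym : ∀ α ∈ s, ∀ p q : Fin n, B α p q = B α q p)
    (horth : ∀ α ∈ s, ∀ β ∈ s, α ≠ β →
      ∑ pq : Fin n × Fin n, B α pq.1 pq.2 * B β pq.1 pq.2 = 0)
    (W : ℝ) (hW : 0 ≤ W)
    (hWb : ∀ α ∈ s, ∑ pq : Fin n × Fin n, (B α pq.1 pq.2)^2 ≤ W)
    (p q : Fin n) (hpq : p ≠ q) :
    ∑ α ∈ s, (B α p q)^2 ≤ W / 2 := by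
  classical
  set w : ι → ℝ := fun α => ∑ pq : Fin n × Fin n, (B α pq.1 pq.2)^2 with hwdef
  have hwnn : ∀ α, 0 ≤ w α := fun α => Finset.sum_nonneg fun _ _ => sq_nonneg _
  have hzero : ∀ α, w α = 0 → B α p q = 0 := by
    intro α h
    have h2 := (Finset.sum_eq_zero_iff_of_nonneg
      (fun i (_ : i ∈ Finset.univ) => sq_nonneg (B α i.1 i.2))).mp h (p, q) (Finset.mem_univ _)
    exact sq_eq_zero_iff.mp h2
  set f : ι → ℝ := fun α => 2 * B α p q / w α with hfdef
  set S : Fin n → Fin n → ℝ := fun a b => ∑ α ∈ s, f α * B α a b with hSdef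
  set X : ℝ := ∑ α ∈ s, (2 * B α p q)^2 / w α with hXdef
  have hXnn : 0 ≤ X := Finset.sum_nonneg fun α _ => div_nonneg (sq_nonneg _) (hwnn α)
  have key : ∀ β ∈ s, ∑ pq : Fin n × Fin n, S pq.1 pq.2 * B β pq.1 pq.2 = f β * w β := by
    intro β hβ
    calc ∑ pq : Fin n × Fin n, S pq.1 pq.2 * B β pq.1 pq.2
        = ∑ pq : Fin n × Fin n, ∑ α ∈ s, f α * (B α pq.1 pq.2 * B β pq.1 pq.2) := by
          apply Finset.sum_congr rfl; intro pq _
          rw [hSdef]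
          rw [Finset.sum_mul]
          apply Finset.sum_congr rfl; intro α _; ring
      _ = ∑ α ∈ s, f α * ∑ pq : Fin n × Fin n, B α pq.1 pq.2 * B β pq.1 pq.2 := by
          rw [Finset.sum_comm]
          apply Finset.sum_congr rfl; intro α _; rw [Finset.mul_sum]
      _ = f β * w β := by
          rw [Finset.sum_eq_single_of_mem β hβ]
          · congr 1
            rw [hwdef]
            apply Finset.sum_congr rfl; intro pq _; rw [pow_two]
          · intro α hα hne
            rw [horth α hα β hβ hne, mul_zero]
  have hexp : ∑ pq : Fin n × Fin n, (S pq.1 pq.2)^2 = ∑ α ∈ s, f α * (f α * w α) := by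
    calc ∑ pq : Fin n × Fin n, (S pq.1 pq.2)^2
        = ∑ pq : Fin n × Fin n, ∑ α ∈ s, f α * (B α pq.1 pq.2 * S pq.1 pq.2) := by
          apply Finset.sum_congr rfl; intro pq _
          rw [pow_two]
          conv_lhs => rw [hSdef]
          rw [Finset.sum_mul]
          apply Finset.sum_congr rfl; intro α _; ring
      _ = ∑ α ∈ s, f α * ∑ pq : Fin n × Fin n, B α pq.1 pq.2 * S pq.1 pq.2 := by
          rw [Finset.sum_comm]
          apply Finset.sum_congr rfl; intro α _; rw [Finset.mul_sum]
      _ = ∑ α ∈ s, f α * (f α * w α) := by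
          apply Finset.sum_congr rfl; intro α hα
          congr 1
          rw [← key α hα]
          apply Finset.sum_congr rfl; intro pq _; ring
  have hterm : ∀ α, f α * (f α * w α) = (2 * B α p q)^2 / w α := by
    intro α
    rcases eq_or_ne (w α) 0 with h | h
    · rw [hfdef]; simp [h]
    · rw [hfdef]; field_simp
  have hexp2 : ∑ pq : Fin n × Fin n, (S pq.1 pq.2)^2 = X := by
    rw [hexp, hXdef]
    exact Finset.sum_congr rfl fun α _ => hterm α
  have hSpq : S p q = X / 2 := by
    rw [hSdef, hXdef, Finset.sum_div]
    apply Finset.sum_congr rfl; intro α hα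
    rcases eq_or_ne (w α) 0 with h | h
    · rw [hfdef]; simp [h, hzero α h]
    · rw [hfdef]; field_simp
  have hSqp : S q p = X / 2 := by
    rw [← hSpq, hSdef]
    apply Finset.sum_congr rfl; intro α hα
    rw [hsym α hα q p]
  have hbound : (S p q)^2 + (S q p)^2 ≤ X := by
    rw [← hexp2]
    have hne : ((p, q) : Fin n × Fin n) ≠ (q, p) := by
      intro h; exact hpq (congrArg Prod.fst h)
    calc (S p q)^2 + (S q p)^2
        = ∑ pq ∈ ({(p,q), (q,p)} : Finset (Fin n × Fin n)), (S pq.1 pq.2)^2 := by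
          rw [Finset.sum_pair hne]
      _ ≤ ∑ pq : Fin n × Fin n, (S pq.1 pq.2)^2 :=
          Finset.sum_le_sum_of_subset_of_nonneg (Finset.subset_univ _)
            (fun _ _ _ => sq_nonneg _)
  have hX2 : X ≤ 2 := by nlinarith [hbound, hSpq, hSqp, hXnn]
  calc ∑ α ∈ s, (B α p q)^2
      ≤ ∑ α ∈ s, (2 * B α p q)^2 / w α * (W/4) := by
        apply Finset.sum_le_sum
        intro α hα
        rcases eq_or_ne (w α) 0 with h | h
        · rw [hzero α h, h]; norm_num
        · have hw0 : 0 < w α := lt_of_le_of_ne (hwnn α) (Ne.symm h)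
          have hwW : w α ≤ W := hWb α hα
          rw [div_mul_eq_mul_div, le_div_iff₀ hw0]
          nlinarith [mul_le_mul_of_nonneg_left hwW (sq_nonneg (B α p q))]
      _ = (W/4) * X := by
          rw [hXdef, Finset.mul_sum]
          apply Finset.sum_congr rfl; intro α _; ring
      _ ≤ (W/4) * 2 := mul_le_mul_of_nonneg_left hX2 (by linarith)
      _ = W / 2 := by ring

lemma sum_sq_subset' (lam : Fin n → ℝ) (hlam : ∑ i, lam i ^ 2 = 1)
    (t : Finset (Fin n)) : ∑ i ∈ t, lam i ^ 2 ≤ 1 := by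
  rw [← hlam]
  exact Finset.sum_le_sum_of_subset_of_nonneg (Finset.subset_univ t)
    fun _ _ _ => sq_nonneg _

lemma L2 (lam : Fin n → ℝ) (hlam : ∑ i, lam i ^ 2 = 1) :
    ∑ pq ∈ Finset.univ.filter
        (fun pq : Fin n × Fin n => 1 < (lam pq.1 - lam pq.2)^2),
      ((lam pq.1 - lam pq.2)^2 - 1) ≤ 2 := by
  classical
  set R : Fin n → Fin n → Prop := fun a b => 1 < (lam a - lam b)^2 with hR
  have hRsymm : ∀ a b, R a b → R b a := by
    intro a b h
    simp only [hR] at h ⊢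
    nlinarith [h]
  have hRne : ∀ a b, R a b → a ≠ b := by
    intro a b h heq
    subst heq
    simp only [hR] at h
    nlinarith [h]
  have hmeet : ∀ a b c d, R a b → R c d → a = c ∨ a = d ∨ b = c ∨ b = d := by
    intro a b c d hab hcd
    by_contra hcon
    push_neg at hcon
    obtain ⟨h1, h2, h3, h4⟩ := hcon
    have hab' := hRne a b hab
    have hcd' := hRne c d hcd
    have hm1 : a ∉ ({b,c,d} : Finset (Fin n)) := by
      simp only [Finset.mem_insert, Finset.mem_singleton]
      push_neg
      exact ⟨hab', h1, h2⟩
    have hm2 : b ∉ ({c,d} : Finset (Fin n)) := by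
      simp only [Finset.mem_insert, Finset.mem_singleton]
      push_neg
      exact ⟨h3, h4⟩
    have e : ∑ i ∈ ({a,b,c,d} : Finset (Fin n)), lam i ^ 2
        = lam a^2 + lam b^2 + lam c^2 + lam d^2 := by
      rw [Finset.sum_insert hm1, Finset.sum_insert hm2, Finset.sum_pair hcd']
      ring
    have hsub : lam a^2 + lam b^2 + lam c^2 + lam d^2 ≤ 1 := by
      rw [← e]; exact sum_sq_subset' lam hlam _
    simp only [hR] at hab hcd
    nlinarith [hab, hcd, hsub, sq_nonneg (lam a + lam b), sq_nonneg (lam c + lam d)]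
  have htri : ∀ a b c, R a b → R b c → R a c → False := by
    intro a b c hab hbc hac
    have h1 := hRne a b hab
    have h2 := hRne b c hbc
    have h3 := hRne a c hac
    have hm1 : a ∉ ({b,c} : Finset (Fin n)) := by
      simp only [Finset.mem_insert, Finset.mem_singleton]
      push_neg
      exact ⟨h1, h3⟩
    have e : ∑ i ∈ ({a,b,c} : Finset (Fin n)), lam i ^ 2
        = lam a^2 + lam b^2 + lam c^2 := by
      rw [Finset.sum_insert hm1, Finset.sum_pair h2]
      ring
    have hsub : lam a^2 + lam b^2 + lam c^2 ≤ 1 := by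
      rw [← e]; exact sum_sq_subset' lam hlam _
    simp only [hR] at hab hbc hac
    nlinarith [hab, hbc, hac, hsub, sq_nonneg (lam a + lam b + lam c)]
  set P := Finset.univ.filter
      (fun pq : Fin n × Fin n => 1 < (lam pq.1 - lam pq.2)^2) with hPdef
  rcases Finset.eq_empty_or_nonempty P with hP | hP
  · rw [hP]; simp
  obtain ⟨⟨p, q⟩, hmemP⟩ := hP
  have hpq : R p q := (Finset.mem_filter.mp hmemP).2
  have hstar : ∃ v, ∀ a b, R a b → a = v ∨ b = v := by
    by_cases hp : ∀ a b, R a b → a = p ∨ b = p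
    · exact ⟨p, hp⟩
    · push_neg at hp
      obtain ⟨r, s, hrs, hrp, hsp⟩ := hp
      refine ⟨q, fun a b hab => ?_⟩
      by_contra hcon
      push_neg at hcon
      obtain ⟨haq, hbq⟩ := hcon
      have hqrs : q = r ∨ q = s := by
        rcases hmeet p q r s hpq hrs with h | h | h | h
        · exact absurd h.symm hrp
        · exact absurd h.symm hsp
        · exact Or.inl h
        · exact Or.inr h
      have habp : a = p ∨ b = p := by
        rcases hmeet a b p q hab hpq with h | h | h | h
        · exact Or.inl h
        · exact absurd h haq
        · exact Or.inr h
        · exact absurd h hbq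
      rcases hqrs with hq1 | hq1
      · have hQS : R q s := by rw [hq1]; exact hrs
        rcases habp with hA | hA
        · rcases hmeet a b r s hab hrs with h | h | h | h
          · exact haq (h.trans hq1.symm)
          · exact hsp (by rw [← h, hA])
          · exact hbq (h.trans hq1.symm)
          · exact htri p q s hpq hQS (by rw [← hA, ← h]; exact hab)
        · rcases hmeet a b r s hab hrs with h | h | h | h
          · exact haq (h.trans hq1.symm)
          · exact htri p q s hpq hQS (hRsymm _ _ (by rw [← h, ← hA]; exact hab))
          · exact hbq (h.trans hq1.symm)
          · exact hsp (by rw [← h, hA])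
      · have hQR : R q r := hRsymm r q (by rw [hq1]; exact hrs)
        rcases habp with hA | hA
        · rcases hmeet a b r s hab hrs with h | h | h | h
          · exact hrp (by rw [← h, hA])
          · exact haq (h.trans hq1.symm)
          · exact htri p q r hpq hQR (by rw [← hA, ← h]; exact hab)
          · exact hbq (h.trans hq1.symm)
        · rcases hmeet a b r s hab hrs with h | h | h | h
          · exact htri p q r hpq hQR (hRsymm _ _ (by rw [← h, ← hA]; exact hab))
          · exact haq (h.trans hq1.symm)
          · exact hrp (by rw [← h, hA])
          · exact hbq (h.trans hq1.symm)
  obtain ⟨v, hv⟩ := hstar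
  set J := Finset.univ.filter (fun j => R v j) with hJdef
  have hvJ : v ∉ J := by
    simp only [hJdef, Finset.mem_filter, Finset.mem_univ, true_and]
    intro h; exact hRne v v h rfl
  have hPS : P ⊆ (J.image (fun j => ((v, j) : Fin n × Fin n))) ∪
      (J.image (fun j => ((j, v) : Fin n × Fin n))) := by
    intro pq hpqmem
    have hRpq : R pq.1 pq.2 := (Finset.mem_filter.mp hpqmem).2
    rcases hv pq.1 pq.2 hRpq with h | h
    · apply Finset.mem_union_left
      apply Finset.mem_image.mpr
      refine ⟨pq.2, ?_, ?_⟩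
      · simp only [hJdef, Finset.mem_filter, Finset.mem_univ, true_and]
        rw [← h]; exact hRpq
      · rw [← h]
    · apply Finset.mem_union_right
      apply Finset.mem_image.mpr
      refine ⟨pq.1, ?_, ?_⟩
      · simp only [hJdef, Finset.mem_filter, Finset.mem_univ, true_and]
        rw [← h]
        exact hRsymm _ _ hRpq
      · rw [← h]
  have hdisj : Disjoint (J.image (fun j => ((v, j) : Fin n × Fin n)))
      (J.image (fun j => ((j, v) : Fin n × Fin n))) := by
    rw [Finset.disjoint_left]
    rintro ⟨x, y⟩ h1 h2
    obtain ⟨j, hj, hje⟩ := Finset.mem_image.mp h1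
    obtain ⟨k, hk, hke⟩ := Finset.mem_image.mp h2
    have hxv : x = v := (congrArg Prod.fst hje).symm
    have hyj : y = j := (congrArg Prod.snd hje).symm
    have hyv : y = v := (congrArg Prod.snd hke).symm
    rw [← hyj, hyv] at hj
    exact hvJ hj
  have hnn : ∀ pq ∈ (J.image (fun j => ((v, j) : Fin n × Fin n))) ∪
      (J.image (fun j => ((j, v) : Fin n × Fin n))),
      0 ≤ (lam pq.1 - lam pq.2)^2 - 1 := by
    intro pq h
    rcases Finset.mem_union.mp h with h | h <;>
      obtain ⟨j, hj, hje⟩ := Finset.mem_image.mp h <;>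
      have hRj : R v j := (Finset.mem_filter.mp hj).2 <;>
      simp only [hR] at hRj <;>
      rw [← hje] <;> simp only []
    · linarith
    · nlinarith [hRj]
  have hinj1 : ∀ x ∈ J, ∀ y ∈ J, ((v, x) : Fin n × Fin n) = (v, y) → x = y := by
    intro x _ y _ h; exact congrArg Prod.snd h
  have hinj2 : ∀ x ∈ J, ∀ y ∈ J, ((x, v) : Fin n × Fin n) = (y, v) → x = y := by
    intro x _ y _ h; exact congrArg Prod.fst h
  have hcard : ∑ j ∈ J, (lam v - lam j)^2 ≤ (J.card : ℝ) + 1 := by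
    have expand : ∑ j ∈ J, (lam v - lam j)^2
        = ∑ j ∈ J, (lam v)^2 - ∑ j ∈ J, (2 * lam v * lam j) + ∑ j ∈ J, (lam j)^2 := by
      rw [← Finset.sum_sub_distrib, ← Finset.sum_add_distrib]
      exact Finset.sum_congr rfl fun j _ => by ring
    have e1 : ∑ j ∈ J, (lam v)^2 = (J.card : ℝ) * (lam v)^2 := by
      rw [Finset.sum_const, nsmul_eq_mul]
    have e2 : ∑ j ∈ J, (2 * lam v * lam j) = 2 * lam v * ∑ j ∈ J, lam j := by
      rw [Finset.mul_sum]
    have cs : (∑ j ∈ J, lam j)^2 ≤ (J.card : ℝ) * ∑ j ∈ J, (lam j)^2 := by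
      have h := Finset.sum_mul_sq_le_sq_mul_sq J (fun _ => 1) lam
      simpa using h
    have constr : (lam v)^2 + ∑ j ∈ J, (lam j)^2 ≤ 1 := by
      have h := sum_sq_subset' lam hlam (insert v J)
      rwa [Finset.sum_insert hvJ] at h
    have cardnn : (0:ℝ) ≤ (J.card : ℝ) := Nat.cast_nonneg _
    have sqnn : 0 ≤ ∑ j ∈ J, (lam j)^2 := Finset.sum_nonneg fun _ _ => sq_nonneg _
    rw [expand, e1, e2]
    nlinarith [cs, constr, cardnn, sqnn, sq_nonneg (lam v + ∑ j ∈ J, lam j)]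
  calc ∑ pq ∈ P, ((lam pq.1 - lam pq.2)^2 - 1)
      ≤ ∑ pq ∈ (J.image (fun j => ((v, j) : Fin n × Fin n))) ∪
          (J.image (fun j => ((j, v) : Fin n × Fin n))),
          ((lam pq.1 - lam pq.2)^2 - 1) :=
        Finset.sum_le_sum_of_subset_of_nonneg hPS (fun pq h _ => hnn pq h)
    _ = ∑ j ∈ J, ((lam v - lam j)^2 - 1) + ∑ j ∈ J, ((lam j - lam v)^2 - 1) := by
        rw [Finset.sum_union hdisj, Finset.sum_image hinj1, Finset.sum_image hinj2]
    _ = 2 * ∑ j ∈ J, ((lam v - lam j)^2 - 1) := by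
        rw [two_mul]
        congr 1
        exact Finset.sum_congr rfl fun j _ => by ring
    _ ≤ 2 := by
        have e : ∑ j ∈ J, ((lam v - lam j)^2 - 1)
            = (∑ j ∈ J, (lam v - lam j)^2) - (J.card : ℝ) := by
          rw [Finset.sum_sub_distrib, Finset.sum_const, nsmul_eq_mul, mul_one]
        rw [e]
        linarith [hcard]

lemma core (s : Finset ι) (lam : Fin n → ℝ) (hlam : ∑ i, lam i ^ 2 = 1)
    (B : ι → Matrix (Fin n) (Fin n) ℝ)
    (hsym : ∀ α ∈ s, ∀ p q : Fin n, B α p q = B α q p)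
    (horth : ∀ α ∈ s, ∀ β ∈ s, α ≠ β →
      ∑ pq : Fin n × Fin n, B α pq.1 pq.2 * B β pq.1 pq.2 = 0)
    (W : ℝ) (hW : 0 ≤ W)
    (hWb : ∀ α ∈ s, ∑ pq : Fin n × Fin n, (B α pq.1 pq.2)^2 ≤ W) :
    ∑ α ∈ s, ∑ pq : Fin n × Fin n, (lam pq.1 - lam pq.2)^2 * (B α pq.1 pq.2)^2
      ≤ W + ∑ α ∈ s, ∑ pq : Fin n × Fin n, (B α pq.1 pq.2)^2 := by
  classical
  set P := Finset.univ.filter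
      (fun pq : Fin n × Fin n => 1 < (lam pq.1 - lam pq.2)^2) with hPdef
  have step1 : ∀ α ∈ s,
      (∑ pq : Fin n × Fin n, (lam pq.1 - lam pq.2)^2 * (B α pq.1 pq.2)^2)
        - ∑ pq : Fin n × Fin n, (B α pq.1 pq.2)^2
      ≤ ∑ pq ∈ P, ((lam pq.1 - lam pq.2)^2 - 1) * (B α pq.1 pq.2)^2 := by
    intro α hα
    rw [← Finset.sum_sub_distrib]
    have e : ∀ pq : Fin n × Fin n,
        (lam pq.1 - lam pq.2)^2 * (B α pq.1 pq.2)^2 - (B α pq.1 pq.2)^2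
        = ((lam pq.1 - lam pq.2)^2 - 1) * (B α pq.1 pq.2)^2 := fun pq => by ring
    rw [Finset.sum_congr rfl fun pq _ => e pq]
    rw [← Finset.sum_filter_add_sum_filter_not Finset.univ
      (fun pq : Fin n × Fin n => 1 < (lam pq.1 - lam pq.2)^2)]
    have hnonpos : ∑ pq ∈ Finset.univ.filter
        (fun pq : Fin n × Fin n => ¬ 1 < (lam pq.1 - lam pq.2)^2),
        ((lam pq.1 - lam pq.2)^2 - 1) * (B α pq.1 pq.2)^2 ≤ 0 := by
      apply Finset.sum_nonpos
      intro pq hpqm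
      have h1 : (lam pq.1 - lam pq.2)^2 - 1 ≤ 0 := by
        have := (Finset.mem_filter.mp hpqm).2
        push_neg at this
        linarith
      nlinarith [sq_nonneg (B α pq.1 pq.2), h1]
    rw [hPdef]
    linarith
  have step2 : ∑ α ∈ s, ∑ pq ∈ P, ((lam pq.1 - lam pq.2)^2 - 1) * (B α pq.1 pq.2)^2
      ≤ W := by
    rw [Finset.sum_comm]
    have e : ∀ pq ∈ P, ∑ α ∈ s, ((lam pq.1 - lam pq.2)^2 - 1) * (B α pq.1 pq.2)^2
        = ((lam pq.1 - lam pq.2)^2 - 1) * ∑ α ∈ s, (B α pq.1 pq.2)^2 :=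
      fun pq _ => (Finset.mul_sum _ _ _).symm
    rw [Finset.sum_congr rfl e]
    calc ∑ pq ∈ P, ((lam pq.1 - lam pq.2)^2 - 1) * ∑ α ∈ s, (B α pq.1 pq.2)^2
        ≤ ∑ pq ∈ P, ((lam pq.1 - lam pq.2)^2 - 1) * (W/2) := by
          apply Finset.sum_le_sum
          intro pq hpqm
          have hgt : 1 < (lam pq.1 - lam pq.2)^2 := (Finset.mem_filter.mp hpqm).2
          have hne : pq.1 ≠ pq.2 := by
            intro h
            rw [h, sub_self] at hgt
            norm_num at hgt
          exact mul_le_mul_of_nonneg_left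
            (bessel s B hsym horth W hW hWb pq.1 pq.2 hne) (by linarith)
      _ = (∑ pq ∈ P, ((lam pq.1 - lam pq.2)^2 - 1)) * (W/2) :=
          (Finset.sum_mul _ _ _).symm
      _ ≤ 2 * (W/2) := mul_le_mul_of_nonneg_right (L2 lam hlam) (by linarith)
      _ = W := by ring
  have hsummed := Finset.sum_le_sum step1
  rw [Finset.sum_sub_distrib] at hsummed
  linarith [step2, hsummed]

lemma conj_trace (U X Y : Matrix (Fin n) (Fin n) ℝ) (hU2 : U * star U = 1) :
    Matrix.trace ((star U * X * U) * (star U * Y * U)) = Matrix.trace (X * Y) := by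
  have e : (star U * X * U) * (star U * Y * U) = star U * (X * (U * star U) * Y) * U := by
    simp only [Matrix.mul_assoc]
  rw [e, hU2, Matrix.mul_one, Matrix.trace_mul_comm]
  rw [show U * (star U * (X * Y)) = (U * star U) * (X * Y) from (Matrix.mul_assoc _ _ _).symm,
    hU2, Matrix.one_mul]

theorem lu_main (n : ℕ) (A : Fin n → Matrix (Fin n) (Fin n) ℝ)
    (i0 i1 : Fin n)
    (hsym : ∀ α, (A α).IsSymm)
    (horth : ∀ α β, α ≠ β → Matrix.trace (A α * (A β)ᵀ) = 0)
    (hnorm1 : Matrix.trace (A i0 * (A i0)ᵀ) = 1)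
    (hmax : ∀ α, α ≠ i0 → Matrix.trace (A α * (A α)ᵀ) ≤ Matrix.trace (A i1 * (A i1)ᵀ)) :
    ∑ α ∈ Finset.univ.erase i0,
      Matrix.trace ((A i0 * A α - A α * A i0) * (A i0 * A α - A α * A i0)ᵀ)
    ≤ Matrix.trace (A i1 * (A i1)ᵀ) +
      ∑ α ∈ Finset.univ.erase i0, Matrix.trace (A α * (A α)ᵀ) := by
  classical
  have hherm : (A i0).IsHermitian := by
    rw [Matrix.IsHermitian, Matrix.conjTranspose_eq_transpose_of_trivial]
    exact hsym i0
  set U : Matrix (Fin n) (Fin n) ℝ := (hherm.eigenvectorUnitary : Matrix (Fin n) (Fin n) ℝ)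
    with hUdef
  have hU1 : star U * U = 1 := by
    rw [hUdef]
    exact (Matrix.mem_unitaryGroup_iff').mp hherm.eigenvectorUnitary.2
  have hU2 : U * star U = 1 := by
    rw [hUdef]
    exact (Matrix.mem_unitaryGroup_iff).mp hherm.eigenvectorUnitary.2
  set lam : Fin n → ℝ := hherm.eigenvalues with hlamdef
  set B : Fin n → Matrix (Fin n) (Fin n) ℝ := fun α => star U * A α * U with hBdef
  have hdiag : B i0 = Matrix.diagonal lam := by
    rw [hBdef]
    have h := hherm.conjStarAlgAut_star_eigenvectorUnitary
    rw [Unitary.conjStarAlgAut_star_apply] at h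
    simp only [RCLike.ofReal_real_eq_id, Function.comp_id] at h
    exact h
  have hBt : ∀ α, (B α)ᵀ = B α := by
    intro α
    rw [hBdef]
    simp only [Matrix.transpose_mul, Matrix.star_eq_conjTranspose,
      Matrix.conjTranspose_eq_transpose_of_trivial, Matrix.transpose_transpose,
      (hsym α).eq, Matrix.mul_assoc]
  have hBsym : ∀ α, ∀ p q : Fin n, B α p q = B α q p := by
    intro α p q
    have h := congrFun (congrFun (hBt α) q) p
    rw [Matrix.transpose_apply] at h
    exact h
  have htr : ∀ α β, Matrix.trace (A α * (A β)ᵀ)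
      = ∑ pq : Fin n × Fin n, B α pq.1 pq.2 * B β pq.1 pq.2 := by
    intro α β
    rw [← trace_form]
    rw [hBt β, show (A β)ᵀ = A β from (hsym β).eq]
    rw [hBdef]
    exact (conj_trace U (A α) (A β) hU2).symm
  have htr2 : ∀ α, Matrix.trace (A α * (A α)ᵀ)
      = ∑ pq : Fin n × Fin n, (B α pq.1 pq.2)^2 := by
    intro α
    rw [htr α α]
    exact Finset.sum_congr rfl fun pq _ => (pow_two _).symm
  have hlam : ∑ i, lam i ^ 2 = 1 := by
    have h1 := (htr2 i0).symm
    rw [hnorm1, hdiag] at h1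
    rw [← h1, Fintype.sum_prod_type]
    simp [Matrix.diagonal_apply, sq]
  have hcomm : ∀ α, B i0 * B α - B α * B i0
      = star U * (A i0 * A α - A α * A i0) * U := by
    intro α
    rw [hBdef]
    have e1 : (star U * A i0 * U) * (star U * A α * U)
        = star U * (A i0 * (U * star U) * A α) * U := by
      simp only [Matrix.mul_assoc]
    have e2 : (star U * A α * U) * (star U * A i0 * U)
        = star U * (A α * (U * star U) * A i0) * U := by
      simp only [Matrix.mul_assoc]
    rw [e1, e2, hU2, Matrix.mul_one, Matrix.mul_one]
    rw [Matrix.mul_sub, Matrix.sub_mul]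
  have hLHS : ∀ α, Matrix.trace ((A i0 * A α - A α * A i0) * (A i0 * A α - A α * A i0)ᵀ)
      = ∑ pq : Fin n × Fin n, (lam pq.1 - lam pq.2)^2 * (B α pq.1 pq.2)^2 := by
    intro α
    have hskew : ∀ (X Y : Matrix (Fin n) (Fin n) ℝ), Xᵀ = X → Yᵀ = Y →
        (X * Y - Y * X)ᵀ = -(X * Y - Y * X) := by
      intro X Y hX hY
      rw [Matrix.transpose_sub, Matrix.transpose_mul, Matrix.transpose_mul, hX, hY, neg_sub]
    have hCt := hskew (A i0) (A α) (hsym i0).eq (hsym α).eq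
    have hDt := hskew (B i0) (B α) (hBt i0) (hBt α)
    have htrace_eq : Matrix.trace ((A i0 * A α - A α * A i0) * (A i0 * A α - A α * A i0)ᵀ)
        = Matrix.trace ((B i0 * B α - B α * B i0) * (B i0 * B α - B α * B i0)ᵀ) := by
      rw [hCt, hDt, Matrix.mul_neg, Matrix.mul_neg, Matrix.trace_neg, Matrix.trace_neg]
      congr 1
      rw [hcomm α]
      exact (conj_trace U _ _ hU2).symm
    rw [htrace_eq, trace_form]
    apply Finset.sum_congr rfl
    intro pq _
    have hentry : (B i0 * B α - B α * B i0) pq.1 pq.2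
        = (lam pq.1 - lam pq.2) * B α pq.1 pq.2 := by
      rw [hdiag]
      simp only [Matrix.sub_apply, Matrix.diagonal_mul, Matrix.mul_diagonal]
      ring
    rw [hentry]
    ring
  -- rewrite goal
  rw [Finset.sum_congr rfl fun α (_ : α ∈ Finset.univ.erase i0) => hLHS α,
      Finset.sum_congr rfl fun α (_ : α ∈ Finset.univ.erase i0) => htr2 α,
      htr2 i1]
  apply core (Finset.univ.erase i0) lam hlam B
  · intro α _; exact hBsym α
  · intro α _ β _ hne
    rw [← htr α β]
    exact horth α β hne
  · exact Finset.sum_nonneg fun pq _ => sq_nonneg _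
  · intro α hα
    rw [← htr2 α, ← htr2 i1]
    exact hmax α (Finset.ne_of_mem_erase hα)

end Lu

open Matrix

/-- Lu's inequality: for real symmetric n×n matrices A₁,…,Aₙ with
tr(A_α A_β) = 0 for α ≠ β, ‖A₁‖ = 1 and ‖A₂‖ ≥ … ≥ ‖Aₙ‖ (Hilbert–Schmidt),
∑_{α=2}^n ‖[A₁,A_α]‖² ≤ ‖A₂‖² + ∑_{α=2}^n ‖A_α‖². -/
theorem lu_inequality (n : ℕ) (hn : 2 ≤ n)
    (A : Fin n → Matrix (Fin n) (Fin n) ℝ)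
    (hsym : ∀ α, (A α).IsSymm)
    (horth : ∀ α β, α ≠ β → Matrix.trace (A α * (A β)ᵀ) = 0)
    (hnorm1 : Matrix.trace (A ⟨0, by omega⟩ * (A ⟨0, by omega⟩)ᵀ) = 1)
    (hmono : ∀ α β : Fin n, 1 ≤ α.val → α ≤ β →
      Matrix.trace (A β * (A β)ᵀ) ≤ Matrix.trace (A α * (A α)ᵀ)) :
    ∑ α ∈ Finset.univ.erase (⟨0, by omega⟩ : Fin n),
      Matrix.trace ((A ⟨0, by omega⟩ * A α - A α * A ⟨0, by omega⟩) *
        (A ⟨0, by omega⟩ * A α - A α * A ⟨0, by omega⟩)ᵀ)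
    ≤ Matrix.trace (A ⟨1, by omega⟩ * (A ⟨1, by omega⟩)ᵀ) +
      ∑ α ∈ Finset.univ.erase (⟨0, by omega⟩ : Fin n),
        Matrix.trace (A α * (A α)ᵀ) := by
  apply Lu.lu_main n A ⟨0, by omega⟩ ⟨1, by omega⟩ hsym horth hnorm1
  intro α hα
  apply hmono ⟨1, by omega⟩ α (by norm_num)
  have hne : α.val ≠ 0 := fun h => hα (Fin.ext h)
  rw [Fin.le_def]
  show 1 ≤ α.val
  omega
end

section
/- In the setting of Lu's inequality, equality ∑_{α=2}^{n} ‖[A₁,A_α]‖² = ‖A₂‖² + ∑_{α=2}^{n} ‖A_α‖² holds if A₁ = λ·diag(k, −I_k, 0) with λ = 1/√(k(k+1)), A_α = μ(E_{1α} + E_{α1}) for 2 ≤ α ≤ k+1, and A_{k+2} = … = Aₙ = 0: verify that these matrices achieve equality, i.e. for this explicit family ∑_{α=2}^{k+1} ‖[A₁,A_α]‖² = ‖A₂‖² + ∑_{α=2}^{k+1} ‖A_α‖². -/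
open Matrix

lemma diag_mul_std {n : ℕ} (d : Fin n → ℝ) (i j : Fin n) :
    Matrix.diagonal d * Matrix.single i j (1:ℝ) = Matrix.single i j (d i) := by
  ext a b
  rw [Matrix.diagonal_mul]
  rcases eq_or_ne i a with rfl | h
  · rcases eq_or_ne j b with rfl | h2
    · simp
    · simp [Matrix.single_apply_of_col_ne _ _ h2]
  · simp [Matrix.single_apply_of_row_ne h]

lemma std_mul_diag {n : ℕ} (d : Fin n → ℝ) (i j : Fin n) :
    Matrix.single i j (1:ℝ) * Matrix.diagonal d = Matrix.single i j (d j) := by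
  ext a b
  rw [Matrix.mul_diagonal]
  rcases eq_or_ne j b with rfl | h
  · rcases eq_or_ne i a with rfl | h2
    · simp
    · simp [Matrix.single_apply_of_row_ne h2]
  · simp [Matrix.single_apply_of_col_ne _ _ h]

lemma std_transpose {n : ℕ} (i j : Fin n) (c : ℝ) :
    (Matrix.single i j c)ᵀ = Matrix.single j i c := by
  ext a b
  rw [Matrix.transpose_apply]
  rcases eq_or_ne i b with rfl | h
  · rcases eq_or_ne j a with rfl | h2
    · simp
    · simp [Matrix.single_apply_of_col_ne _ _ h2,
        Matrix.single_apply_of_row_ne h2]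
  · simp [Matrix.single_apply_of_row_ne h,
      Matrix.single_apply_of_col_ne _ _ h]

/-- Equality case of Lu's inequality: for the explicit family
A₁ = λ·diag(k, −I_k, 0) with λ = 1/√(k(k+1)),
A_α = μ(E_{1α} + E_{α1}) for 2 ≤ α ≤ k+1 and A_{k+2} = … = Aₙ = 0,
one has ∑_{α=2}^n ‖[A₁,A_α]‖² = ‖A₂‖² + ∑_{α=2}^n ‖A_α‖².
(Indices are 0-based.) -/
theorem lu_equality_case (n k : ℕ) (hn : 2 ≤ n) (hk : 1 ≤ k) (hkn : k ≤ n - 1)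
    (lam mu : ℝ) (hlam : lam = 1 / Real.sqrt (k * (k + 1)))
    (A : Fin n → Matrix (Fin n) (Fin n) ℝ)
    (hA0 : A ⟨0, by omega⟩ = lam • Matrix.diagonal
      (fun i : Fin n => if i.val = 0 then (k : ℝ) else if i.val ≤ k then -1 else 0))
    (hAmid : ∀ α : Fin n, 1 ≤ α.val → α.val ≤ k →
      A α = mu • (Matrix.single ⟨0, by omega⟩ α (1 : ℝ) +
        Matrix.single α ⟨0, by omega⟩ (1 : ℝ)))
    (hAtop : ∀ α : Fin n, k + 1 ≤ α.val → A α = 0) :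
    ∑ α ∈ Finset.univ.erase (⟨0, by omega⟩ : Fin n),
      Matrix.trace ((A ⟨0, by omega⟩ * A α - A α * A ⟨0, by omega⟩) *
        (A ⟨0, by omega⟩ * A α - A α * A ⟨0, by omega⟩)ᵀ)
    = Matrix.trace (A ⟨1, by omega⟩ * (A ⟨1, by omega⟩)ᵀ) +
      ∑ α ∈ Finset.univ.erase (⟨0, by omega⟩ : Fin n),
        Matrix.trace (A α * (A α)ᵀ) := by
  have hz2 : (0 : ℕ) < n := by omega
  set z : Fin n := ⟨0, by omega⟩ with hz
  set o : Fin n := ⟨1, by omega⟩ with ho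
  set d : Fin n → ℝ := fun i : Fin n => if i.val = 0 then (k : ℝ) else if i.val ≤ k then -1 else 0 with hd
  -- the per-term computation for middle indices
  have key1 : ∀ α : Fin n, 1 ≤ α.val → α.val ≤ k →
      Matrix.trace ((A z * A α - A α * A z) * (A z * A α - A α * A z)ᵀ)
        = 2 * (lam * mu * ((k:ℝ) + 1))^2 := by
    intro α h1 h2
    have hzα : z ≠ α := by
      intro h; apply absurd (congrArg Fin.val h); simp [hz]; omega
    have hαz : α ≠ z := Ne.symm hzα
    have hdz : d z = (k : ℝ) := by simp [hd, hz]
    have hdα : d α = -1 := by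
      simp only [hd]
      rw [if_neg (by omega), if_pos h2]
    have hC : A z * A α - A α * A z
        = (lam * mu * ((k:ℝ) + 1)) • Matrix.single z α (1:ℝ)
          - (lam * mu * ((k:ℝ) + 1)) • Matrix.single α z (1:ℝ) := by
      rw [hA0, hAmid α h1 h2]
      rw [Matrix.smul_mul, Matrix.mul_smul, Matrix.mul_smul, Matrix.smul_mul,
        mul_add, add_mul, diag_mul_std, diag_mul_std, std_mul_diag, std_mul_diag,
        hdz, hdα]
      have e1 : Matrix.single z α (k:ℝ) = (k:ℝ) • Matrix.single z α (1:ℝ) := by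
        simp
      have e2 : Matrix.single α z (k:ℝ) = (k:ℝ) • Matrix.single α z (1:ℝ) := by
        simp
      have e3 : Matrix.single z α (-1:ℝ) = (-1:ℝ) • Matrix.single z α (1:ℝ) := by
        rw [Matrix.smul_single]; norm_num
      have e4 : Matrix.single α z (-1:ℝ) = (-1:ℝ) • Matrix.single α z (1:ℝ) := by
        rw [Matrix.smul_single]; norm_num
      rw [e1, e2, e3, e4]
      module
    rw [hC]
    rw [Matrix.transpose_sub, Matrix.transpose_smul, Matrix.transpose_smul,
      std_transpose, std_transpose]
    set c := lam * mu * ((k:ℝ) + 1)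
    rw [sub_mul, mul_sub, mul_sub]
    rw [Matrix.smul_mul, Matrix.mul_smul, Matrix.smul_mul, Matrix.mul_smul,
      Matrix.smul_mul, Matrix.mul_smul, Matrix.smul_mul, Matrix.mul_smul]
    rw [Matrix.single_mul_single_same, Matrix.single_mul_single_same,
      Matrix.single_mul_single_of_ne (c := (1:ℝ)) z α z hαz (1:ℝ),
      Matrix.single_mul_single_of_ne (c := (1:ℝ)) α z α hzα (1:ℝ)]
    simp only [smul_zero, sub_zero, zero_sub, Matrix.trace_sub, Matrix.trace_neg,
      Matrix.trace_smul, Matrix.trace_single_eq_same, smul_eq_mul, mul_one]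
    ring
  have key2 : ∀ α : Fin n, 1 ≤ α.val → α.val ≤ k →
      Matrix.trace (A α * (A α)ᵀ) = 2 * mu^2 := by
    intro α h1 h2
    have hzα : z ≠ α := by
      intro h; apply absurd (congrArg Fin.val h); simp [hz]; omega
    have hαz : α ≠ z := Ne.symm hzα
    rw [hAmid α h1 h2]
    rw [Matrix.transpose_smul, Matrix.transpose_add, std_transpose, std_transpose]
    rw [Matrix.smul_mul, Matrix.mul_smul, smul_smul]
    rw [add_mul, mul_add, mul_add]
    rw [Matrix.single_mul_single_same, Matrix.single_mul_single_same,
      Matrix.single_mul_single_of_ne (c := (1:ℝ)) z α z hαz (1:ℝ),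
      Matrix.single_mul_single_of_ne (c := (1:ℝ)) α z α hzα (1:ℝ)]
    simp only [add_zero, zero_add, Matrix.trace_smul, Matrix.trace_add,
      Matrix.trace_single_eq_same, smul_eq_mul, mul_one]
    ring
  -- rewrite the sums termwise
  have L : ∑ α ∈ Finset.univ.erase z,
      Matrix.trace ((A z * A α - A α * A z) * (A z * A α - A α * A z)ᵀ)
      = ∑ α ∈ Finset.univ.erase z,
        (if α.val ≤ k then 2 * (lam * mu * ((k:ℝ) + 1))^2 else 0) := by
    refine Finset.sum_congr rfl ?_
    intro α hα
    have hα1 : 1 ≤ α.val := by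
      have := Finset.ne_of_mem_erase hα
      have : α.val ≠ 0 := fun h => this (Fin.ext (by simp [hz, h]))
      omega
    by_cases h2 : α.val ≤ k
    · rw [if_pos h2]; exact key1 α hα1 h2
    · rw [if_neg h2, hAtop α (by omega)]
      simp
  have R : ∑ α ∈ Finset.univ.erase z, Matrix.trace (A α * (A α)ᵀ)
      = ∑ α ∈ Finset.univ.erase z, (if α.val ≤ k then 2 * mu^2 else 0) := by
    refine Finset.sum_congr rfl ?_
    intro α hα
    have hα1 : 1 ≤ α.val := by
      have := Finset.ne_of_mem_erase hα
      have : α.val ≠ 0 := fun h => this (Fin.ext (by simp [hz, h]))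
      omega
    by_cases h2 : α.val ≤ k
    · rw [if_pos h2]; exact key2 α hα1 h2
    · rw [if_neg h2, hAtop α (by omega)]
      simp
  have cnt : ∀ c : ℝ, ∑ α ∈ Finset.univ.erase z,
      (if α.val ≤ k then c else 0) = (k : ℝ) * c := by
    intro c
    have h1 : ∑ α : Fin n, (if α.val ≤ k then c else 0) = ((k:ℝ) + 1) * c := by
      rw [Fin.sum_univ_eq_sum_range (fun i => if i ≤ k then c else 0)]
      rw [Finset.sum_ite, Finset.sum_const_zero, add_zero, Finset.sum_const]
      have hfil : (Finset.range n).filter (fun i => i ≤ k) = Finset.range (k+1) := by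
        ext i
        simp only [Finset.mem_filter, Finset.mem_range]
        omega
      rw [hfil, Finset.card_range]
      ring
    have h2 := Finset.add_sum_erase Finset.univ
      (fun α : Fin n => if α.val ≤ k then c else 0) (Finset.mem_univ z)
    rw [h1] at h2
    have hzk : (if z.val ≤ k then c else 0) = c := by
      rw [if_pos]; simp [hz]
    simp only [hzk] at h2
    linarith
  rw [L, R, cnt, cnt]
  have h1k : (1:ℕ) ≤ k := hk
  rw [key2 o (by simp [ho]) (by simpa [ho] using h1k)]
  have hkpos : (0:ℝ) < (k:ℝ) := by exact_mod_cast Nat.pos_of_ne_zero (by omega)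
  have hlam2 : lam^2 * ((k:ℝ) * ((k:ℝ)+1)) = 1 := by
    rw [hlam, div_pow, one_pow, Real.sq_sqrt (by positivity)]
    field_simp
  linear_combination (2 * mu^2 * ((k:ℝ)+1)) * hlam2
end
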